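/- For every ε > 0 there exists N such that every tournament T on n ≥ N vertices satisfies c4(T) ≥ 6·c3(T)² − ε, where c3(T) is the fraction of 3-element vertex subsets spanning a cyclic triangle and c4(T) is the fraction of 4-element vertex subsets whose induced subtournament contains a directed 4-cycle. -/

import Mathlib

open Finset

/-- A tournament on `Fin n`: an orientation of the complete graph, i.e. no loops and
for all distinct `x, y` exactly one of `r x y`, `r y x` holds. -/
def IsTournament {n : ℕ} (r : Fin n → Fin n → Prop) : Prop :=
  (∀ x, ¬ r x x) ∧ ∀ x y : Fin n, x ≠ y → ((r x y ∧ ¬ r y x) ∨ (r y x ∧ ¬ r x y))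

/-- `s` spans a cyclic triangle: `s = {x,y,z}` with `x→y→z→x`. -/
def IsCyclicTriple {n : ℕ} (r : Fin n → Fin n → Prop) (s : Finset (Fin n)) : Prop :=
  ∃ x y z : Fin n, x ≠ y ∧ y ≠ z ∧ x ≠ z ∧ s = {x, y, z} ∧ r x y ∧ r y z ∧ r z x

/-- `s` spans a transitive triple. -/
def IsTransTriple {n : ℕ} (r : Fin n → Fin n → Prop) (s : Finset (Fin n)) : Prop :=
  ∃ x y z : Fin n, x ≠ y ∧ y ≠ z ∧ x ≠ z ∧ s = {x, y, z} ∧ r x y ∧ r y z ∧ r x z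

/-- `s` contains a directed 4-cycle through all of its (four) elements. -/
def HasCycle4 {n : ℕ} (r : Fin n → Fin n → Prop) (s : Finset (Fin n)) : Prop :=
  ∃ a b c d : Fin n, a ≠ b ∧ a ≠ c ∧ a ≠ d ∧ b ≠ c ∧ b ≠ d ∧ c ≠ d ∧
    s = {a, b, c, d} ∧ r a b ∧ r b c ∧ r c d ∧ r d a

/-- `s` spans a transitive 4-vertex subtournament. -/
def IsTrans4 {n : ℕ} (r : Fin n → Fin n → Prop) (s : Finset (Fin n)) : Prop :=
  ∃ a b c d : Fin n, a ≠ b ∧ a ≠ c ∧ a ≠ d ∧ b ≠ c ∧ b ≠ d ∧ c ≠ d ∧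
    s = {a, b, c, d} ∧ r a b ∧ r a c ∧ r a d ∧ r b c ∧ r b d ∧ r c d

open Classical in
/-- `C3(T)`: number of 3-element vertex subsets spanning a cyclic triangle. -/
noncomputable def cyc3Count {n : ℕ} (r : Fin n → Fin n → Prop) : ℕ :=
  ((univ.powersetCard 3).filter (fun s => IsCyclicTriple r s)).card

open Classical in
/-- `T3(T)`: number of 3-element vertex subsets spanning a transitive triple. -/
noncomputable def trans3Count {n : ℕ} (r : Fin n → Fin n → Prop) : ℕ :=
  ((univ.powersetCard 3).filter (fun s => IsTransTriple r s)).card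

open Classical in
/-- `C4(T)`: number of 4-element vertex subsets containing a directed 4-cycle. -/
noncomputable def cyc4Count {n : ℕ} (r : Fin n → Fin n → Prop) : ℕ :=
  ((univ.powersetCard 4).filter (fun s => HasCycle4 r s)).card

open Classical in
/-- `T4(T)`: number of 4-element vertex subsets spanning a transitive subtournament. -/
noncomputable def trans4Count {n : ℕ} (r : Fin n → Fin n → Prop) : ℕ :=
  ((univ.powersetCard 4).filter (fun s => IsTrans4 r s)).card
section TournAux

open Finset
variable {n : ℕ} (r : Fin n → Fin n → Prop)

open Classical in
noncomputable def tEset : Finset (Fin n × Fin n) := univ.filter fun p => r p.1 p.2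

open Classical in
noncomputable def tDset (p : Fin n × Fin n) : Finset (Fin n) :=
  univ.filter fun w => r p.2 w ∧ r w p.1

open Classical in
noncomputable def tS3 : Finset (Fin n × Fin n × Fin n) :=
  univ.filter fun t => r t.1 t.2.1 ∧ r t.2.1 t.2.2 ∧ r t.2.2 t.1

open Classical in
noncomputable def tT4 : Finset (Fin n × Fin n × Fin n × Fin n) :=
  univ.filter fun q => r q.1 q.2.1 ∧ r q.2.1 q.2.2.1 ∧ r q.2.2.1 q.1 ∧
    r q.2.1 q.2.2.2 ∧ r q.2.2.2 q.1 ∧ q.2.2.1 ≠ q.2.2.2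

variable {r}

lemma tasym (hr : IsTournament r) {a b : Fin n} (h : r a b) : ¬ r b a := by
  intro h'
  rcases eq_or_ne a b with rfl | e
  · exact hr.1 a h
  · rcases hr.2 a b e with ⟨h1, h2⟩ | ⟨h1, h2⟩
    · exact h2 h'
    · exact h2 h

lemma tne (hr : IsTournament r) {a b : Fin n} (h : r a b) : a ≠ b :=
  fun e => hr.1 a (e ▸ h)

lemma tEset_card (hr : IsTournament r) : 2 * (tEset r).card = n * n - n := by
  classical
  have hswap : (univ.filter fun p : Fin n × Fin n => r p.2 p.1).card = (tEset r).card := by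
    apply Finset.card_nbij' Prod.swap Prod.swap <;> simp [tEset, Set.MapsTo, Set.LeftInvOn, Set.RightInvOn]
  have hdisj : Disjoint (tEset r) (univ.filter fun p : Fin n × Fin n => r p.2 p.1) := by
    rw [Finset.disjoint_left]
    intro p hp hp'
    simp only [tEset, mem_filter, mem_univ, true_and] at hp hp'
    exact tasym hr hp hp'
  have hunion : (tEset r) ∪ (univ.filter fun p : Fin n × Fin n => r p.2 p.1)
      = (univ : Finset (Fin n)).offDiag := by
    ext p
    simp only [tEset, mem_union, mem_filter, mem_univ, true_and, Finset.mem_offDiag]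
    constructor
    · rintro (h | h)
      · exact tne hr h
      · exact (tne hr h).symm
    · intro hne
      rcases hr.2 p.1 p.2 hne with ⟨h1, _⟩ | ⟨h1, _⟩
      · exact Or.inl h1
      · exact Or.inr h1
  have := Finset.card_union_of_disjoint hdisj
  rw [hunion, Finset.offDiag_card, hswap] at this
  simp only [card_univ, Fintype.card_fin] at this
  omega

lemma tS3_card (hr : IsTournament r) :
    (tS3 r).card = ∑ p ∈ tEset r, (tDset r p).card := by
  classical
  rw [Finset.card_eq_sum_card_fiberwise
    (f := fun t : Fin n × Fin n × Fin n => (t.1, t.2.1)) (t := tEset r) ?_]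
  · refine Finset.sum_congr rfl fun p hp => ?_
    simp only [tEset, mem_filter, mem_univ, true_and] at hp
    apply Finset.card_nbij' (fun t => t.2.2) (fun w => (p.1, p.2, w))
    · rintro ⟨a, b, c⟩ ht
      simp only [Finset.mem_coe, tS3, mem_filter, mem_univ, true_and] at ht
      obtain ⟨⟨h1, h2, h3⟩, he⟩ := ht
      subst he
      simp only [Finset.mem_coe, tDset, mem_filter, mem_univ, true_and]
      exact ⟨h2, h3⟩
    · intro w hw
      simp only [Finset.mem_coe, tDset, mem_filter, mem_univ, true_and] at hw
      simp only [Finset.mem_coe, mem_filter, tS3, mem_univ, true_and]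
      refine ⟨⟨hp, hw.1, hw.2⟩, ?_⟩
      simp
    · rintro ⟨a, b, c⟩ ht
      simp only [Finset.mem_coe, mem_filter] at ht
      have he := ht.2
      subst he
      rfl
    · intro w _; rfl
  · intro t ht
    simp only [Finset.mem_coe, tS3, mem_filter, mem_univ, true_and] at ht
    simp only [Finset.mem_coe, tEset, mem_filter, mem_univ, true_and]
    exact ht.1

lemma tS3_ge (hr : IsTournament r) : 3 * cyc3Count r ≤ (tS3 r).card := by
  classical
  have key : (tS3 r).card = ∑ s ∈ (univ.powersetCard 3).filter (fun s => IsCyclicTriple r s),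
      ((tS3 r).filter (fun t => ({t.1, t.2.1, t.2.2} : Finset (Fin n)) = s)).card := by
    apply Finset.card_eq_sum_card_fiberwise
    intro t ht
    simp only [Finset.mem_coe, tS3, mem_filter, mem_univ, true_and] at ht
    obtain ⟨h1, h2, h3⟩ := ht
    have d12 : t.1 ≠ t.2.1 := tne hr h1
    have d23 : t.2.1 ≠ t.2.2 := tne hr h2
    have d13 : t.1 ≠ t.2.2 := (tne hr h3).symm
    simp only [Finset.mem_coe, mem_filter, Finset.mem_powersetCard]
    refine ⟨⟨fun _ _ => mem_univ _, ?_⟩, t.1, t.2.1, t.2.2, d12, d23, d13, rfl, h1, h2, h3⟩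
    rw [Finset.card_insert_of_notMem (by simp [d12, d13]),
      Finset.card_insert_of_notMem (by simp [d23]), Finset.card_singleton]
  rw [key]
  have hbound : ∀ s ∈ (univ.powersetCard 3).filter (fun s => IsCyclicTriple r s),
      3 ≤ ((tS3 r).filter (fun t => ({t.1, t.2.1, t.2.2} : Finset (Fin n)) = s)).card := by
    intro s hs
    simp only [mem_filter] at hs
    obtain ⟨x, y, z, dxy, dyz, dxz, rfl, h1, h2, h3⟩ := hs.2
    have hsub : ({(x, y, z), (y, z, x), (z, x, y)} : Finset (Fin n × Fin n × Fin n)) ⊆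
        (tS3 r).filter (fun t => ({t.1, t.2.1, t.2.2} : Finset (Fin n)) = {x, y, z}) := by
      intro t ht
      simp only [Finset.mem_insert, Finset.mem_singleton] at ht
      rcases ht with rfl | rfl | rfl <;>
        simp only [tS3, mem_filter, mem_univ, true_and] <;>
        refine ⟨⟨by assumption, by assumption, by assumption⟩, ?_⟩ <;>
        · first
          | trivial
          | (ext a; simp; tauto)
    have hcard : ({(x, y, z), (y, z, x), (z, x, y)} : Finset (Fin n × Fin n × Fin n)).card = 3 := by
      rw [Finset.card_insert_of_notMem, Finset.card_insert_of_notMem, Finset.card_singleton]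
      · simp only [Finset.mem_singleton]
        intro h; exact dyz (congrArg Prod.fst h)
      · simp only [Finset.mem_insert, Finset.mem_singleton]
        rintro (h | h)
        · exact dxy (congrArg Prod.fst h)
        · exact dxz (congrArg Prod.fst h)
    calc 3 = ({(x, y, z), (y, z, x), (z, x, y)} : Finset (Fin n × Fin n × Fin n)).card := hcard.symm
    _ ≤ _ := Finset.card_le_card hsub
  calc 3 * cyc3Count r
      = ∑ _s ∈ (univ.powersetCard 3).filter (fun s => IsCyclicTriple r s), 3 := by
        rw [Finset.sum_const, smul_eq_mul, mul_comm]; rfl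
    _ ≤ _ := Finset.sum_le_sum hbound

lemma tT4_card (hr : IsTournament r) :
    (tT4 r).card = ∑ p ∈ tEset r, ((tDset r p).card * (tDset r p).card - (tDset r p).card) := by
  classical
  rw [Finset.card_eq_sum_card_fiberwise
    (f := fun q : Fin n × Fin n × Fin n × Fin n => (q.1, q.2.1)) (t := tEset r) ?_]
  · refine Finset.sum_congr rfl fun p hp => ?_
    simp only [tEset, mem_filter, mem_univ, true_and] at hp
    rw [← Finset.offDiag_card]
    apply Finset.card_nbij' (fun q => (q.2.2.1, q.2.2.2)) (fun z => (p.1, p.2, z.1, z.2))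
    · rintro ⟨a, b, c, d⟩ hq
      simp only [Finset.mem_coe, tT4, mem_filter, mem_univ, true_and] at hq
      obtain ⟨⟨h1, h2, h3, h4, h5, h6⟩, he⟩ := hq
      subst he
      simp only [Finset.mem_coe, Finset.mem_offDiag, tDset, mem_filter, mem_univ, true_and]
      exact ⟨⟨h2, h3⟩, ⟨h4, h5⟩, h6⟩
    · rintro ⟨x, y⟩ hz
      simp only [Finset.mem_coe, Finset.mem_offDiag, tDset, mem_filter, mem_univ, true_and] at hz
      simp only [Finset.mem_coe, mem_filter, tT4, mem_univ, true_and]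
      refine ⟨⟨hp, hz.1.1, hz.1.2, hz.2.1.1, hz.2.1.2, hz.2.2⟩, ?_⟩
      simp
    · rintro ⟨a, b, c, d⟩ hq
      simp only [Finset.mem_coe, mem_filter] at hq
      have he := hq.2
      subst he
      rfl
    · intro z _; rfl
  · intro q hq
    simp only [Finset.mem_coe, tT4, mem_filter, mem_univ, true_and] at hq
    simp only [Finset.mem_coe, tEset, mem_filter, mem_univ, true_and]
    exact hq.1

lemma tUniq (hr : IsTournament r) {u v w w' u2 v2 w2 w2' : Fin n}
    (h1 : r u v) (h2 : r v w) (h3 : r w u) (h4 : r v w') (h5 : r w' u) (h6 : w ≠ w')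
    (g1 : r u2 v2) (g2 : r v2 w2) (g3 : r w2 u2) (g4 : r v2 w2') (g5 : r w2' u2)
    (g6 : w2 ≠ w2')
    (hs : ({u2, v2, w2, w2'} : Finset (Fin n)) = {u, v, w, w'}) :
    (u2, v2, w2, w2') = (u, v, w, w') ∨ (u2, v2, w2, w2') = (u, v, w', w) := by
  have n1 := tasym hr h1
  have n2 := tasym hr h2
  have n3 := tasym hr h3
  have n4 := tasym hr h4
  have n5 := tasym hr h5
  have iu : ¬ r u u := hr.1 u
  have iv : ¬ r v v := hr.1 v
  have iw : ¬ r w w := hr.1 w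
  have iw' : ¬ r w' w' := hr.1 w'
  have hu2 : u2 = u ∨ u2 = v ∨ u2 = w ∨ u2 = w' := by
    have : u2 ∈ ({u, v, w, w'} : Finset (Fin n)) := by rw [← hs]; simp
    simpa using this
  have hv2 : v2 = u ∨ v2 = v ∨ v2 = w ∨ v2 = w' := by
    have : v2 ∈ ({u, v, w, w'} : Finset (Fin n)) := by rw [← hs]; simp
    simpa using this
  have hw2 : w2 = u ∨ w2 = v ∨ w2 = w ∨ w2 = w' := by
    have : w2 ∈ ({u, v, w, w'} : Finset (Fin n)) := by rw [← hs]; simp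
    simpa using this
  have hw2' : w2' = u ∨ w2' = v ∨ w2' = w ∨ w2' = w' := by
    have : w2' ∈ ({u, v, w, w'} : Finset (Fin n)) := by rw [← hs]; simp
    simpa using this
  rcases hr.2 w w' h6 with ⟨hd1, hd2⟩ | ⟨hd1, hd2⟩ <;>
    rcases hu2 with rfl | rfl | rfl | rfl <;>
    rcases hv2 with rfl | rfl | rfl | rfl <;>
    rcases hw2 with rfl | rfl | rfl | rfl <;>
    rcases hw2' with rfl | rfl | rfl | rfl <;>
    simp_all

lemma tT4_le (hr : IsTournament r) : (tT4 r).card ≤ 2 * cyc4Count r := by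
  classical
  have key : (tT4 r).card = ∑ s ∈ (univ.powersetCard 4).filter (fun s => HasCycle4 r s),
      ((tT4 r).filter
        (fun q => ({q.1, q.2.1, q.2.2.1, q.2.2.2} : Finset (Fin n)) = s)).card := by
    apply Finset.card_eq_sum_card_fiberwise
    intro q hq
    simp only [Finset.mem_coe, tT4, mem_filter, mem_univ, true_and] at hq
    obtain ⟨h1, h2, h3, h4, h5, h6⟩ := hq
    have duv : q.1 ≠ q.2.1 := tne hr h1
    have dvw : q.2.1 ≠ q.2.2.1 := tne hr h2
    have dwu : q.2.2.1 ≠ q.1 := tne hr h3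
    have dvw' : q.2.1 ≠ q.2.2.2 := tne hr h4
    have dw'u : q.2.2.2 ≠ q.1 := tne hr h5
    simp only [Finset.mem_coe, mem_filter, Finset.mem_powersetCard]
    refine ⟨⟨fun _ _ => mem_univ _, ?_⟩, ?_⟩
    · rw [Finset.card_insert_of_notMem (by simp [duv, dwu.symm, dw'u.symm]),
        Finset.card_insert_of_notMem (by simp [dvw, dvw']),
        Finset.card_insert_of_notMem (by simp [h6]), Finset.card_singleton]
    · rcases hr.2 q.2.2.1 q.2.2.2 h6 with ⟨hd, _⟩ | ⟨hd, _⟩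
      · exact ⟨q.1, q.2.1, q.2.2.1, q.2.2.2, duv, dwu.symm, dw'u.symm, dvw, dvw', h6,
          rfl, h1, h2, hd, h5⟩
      · refine ⟨q.1, q.2.1, q.2.2.2, q.2.2.1, duv, dw'u.symm, dwu.symm, dvw', dvw, Ne.symm h6,
          ?_, h1, h4, hd, h3⟩
        ext a; simp; tauto
  rw [key]
  have hbound : ∀ s ∈ (univ.powersetCard 4).filter (fun s => HasCycle4 r s),
      ((tT4 r).filter
        (fun q => ({q.1, q.2.1, q.2.2.1, q.2.2.2} : Finset (Fin n)) = s)).card ≤ 2 := by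
    intro s _
    set F := (tT4 r).filter
      (fun q => ({q.1, q.2.1, q.2.2.1, q.2.2.2} : Finset (Fin n)) = s) with hF
    rcases F.eq_empty_or_nonempty with he | ⟨q0, hq0⟩
    · simp [he]
    · have hq0' := hq0
      simp only [hF, tT4, mem_filter, mem_univ, true_and] at hq0'
      obtain ⟨⟨h1, h2, h3, h4, h5, h6⟩, he0⟩ := hq0'
      have hsub : F ⊆ {q0, (q0.1, q0.2.1, q0.2.2.2, q0.2.2.1)} := by
        intro q hq
        simp only [hF, tT4, mem_filter, mem_univ, true_and] at hq
        obtain ⟨⟨g1, g2, g3, g4, g5, g6⟩, heq⟩ := hq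
        have := tUniq hr h1 h2 h3 h4 h5 h6 g1 g2 g3 g4 g5 g6 (heq.trans he0.symm)
        simp only [Finset.mem_insert, Finset.mem_singleton]
        rcases this with h | h
        · left
          have e1 : q.1 = q0.1 := congrArg (fun t => t.1) h
          have e2 : q.2.1 = q0.2.1 := congrArg (fun t => t.2.1) h
          have e3 : q.2.2.1 = q0.2.2.1 := congrArg (fun t => t.2.2.1) h
          have e4 : q.2.2.2 = q0.2.2.2 := congrArg (fun t => t.2.2.2) h
          ext <;> simp [e1, e2, e3, e4]
        · right
          have e1 : q.1 = q0.1 := congrArg (fun t => t.1) h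
          have e2 : q.2.1 = q0.2.1 := congrArg (fun t => t.2.1) h
          have e3 : q.2.2.1 = q0.2.2.2 := congrArg (fun t => t.2.2.1) h
          have e4 : q.2.2.2 = q0.2.2.1 := congrArg (fun t => t.2.2.2) h
          ext <;> simp [e1, e2, e3, e4]
      calc F.card ≤ _ := Finset.card_le_card hsub
        _ ≤ 2 := by
          apply le_trans (Finset.card_insert_le _ _)
          simp
  calc ∑ s ∈ (univ.powersetCard 4).filter (fun s => HasCycle4 r s),
        ((tT4 r).filter
          (fun q => ({q.1, q.2.1, q.2.2.1, q.2.2.2} : Finset (Fin n)) = s)).card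
      ≤ ∑ _s ∈ (univ.powersetCard 4).filter (fun s => HasCycle4 r s), 2 :=
        Finset.sum_le_sum hbound
    _ = 2 * cyc4Count r := by rw [Finset.sum_const, smul_eq_mul, mul_comm]; rfl

end TournAux
set_option maxHeartbeats 1000000
/-- for every `ε > 0` there is `N` such that every tournament on
`n ≥ N` vertices satisfies `c4 ≥ 6·c3² − ε`. -/
theorem stmt_8 :
    ∀ ε : ℝ, 0 < ε → ∃ N : ℕ, ∀ n : ℕ, N ≤ n → ∀ r : Fin n → Fin n → Prop,
      IsTournament r →
        (cyc4Count r : ℝ) / (n.choose 4 : ℝ) ≥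
          6 * ((cyc3Count r : ℝ) / (n.choose 3 : ℝ)) ^ 2 - ε := by
  intro ε hε
  obtain ⟨N0, hN0⟩ := exists_nat_gt (24 / ε)
  refine ⟨max 6 N0, fun n hn r hr => ?_⟩
  classical
  have hn6 : 6 ≤ n := le_trans (le_max_left _ _) hn
  have hnN0 : N0 ≤ n := le_trans (le_max_right _ _) hn
  set m := (tEset r).card with hmdef
  have hm2 : 2 * m = n * n - n := tEset_card hr
  have hsq : n * (n - 1) = n * n - n := by
    cases n with
    | zero => rfl
    | succ k => rw [Nat.succ_sub_one, Nat.mul_succ, Nat.add_sub_cancel]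
  have hb2 : n.choose 2 * 2 = n * (n - 1) := by
    have h := Nat.choose_succ_right_eq n 1
    simpa using h
  have hmb2 : m = n.choose 2 := by
    have h : 2 * m = 2 * n.choose 2 := by rw [hm2, ← hsq, ← hb2]; ring
    exact Nat.eq_of_mul_eq_mul_left (by norm_num) h
  have h33 : n.choose 3 * 3 = n.choose 2 * (n - 2) := Nat.choose_succ_right_eq n 2
  have h44 : n.choose 4 * 4 = n.choose 3 * (n - 3) := Nat.choose_succ_right_eq n 3
  have hmpos : 0 < m := by
    rw [hmb2]; exact Nat.choose_pos (by omega)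
  have hb3posN : 0 < n.choose 3 := Nat.choose_pos (by omega)
  have hb4posN : 0 < n.choose 4 := Nat.choose_pos (by omega)
  set A := (tS3 r).card with hAdef
  have hA3 : 3 * cyc3Count r ≤ A := tS3_ge hr
  have hdle : ∀ p : Fin n × Fin n, (tDset r p).card ≤ n := by
    intro p
    calc (tDset r p).card ≤ (univ : Finset (Fin n)).card := Finset.card_le_univ _
      _ = n := by simp
  have hAmn : A ≤ m * n := by
    rw [hAdef, tS3_card hr]
    calc ∑ p ∈ tEset r, (tDset r p).card ≤ ∑ _p ∈ tEset r, n :=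
          Finset.sum_le_sum fun p _ => hdle p
      _ = m * n := by rw [Finset.sum_const, smul_eq_mul]
  -- real versions
  set nR := (n : ℝ) with hnRdef
  set mR := (m : ℝ) with hmRdef
  set AR := (A : ℝ) with hARdef
  set C3 := (cyc3Count r : ℝ) with hC3def
  set C4 := (cyc4Count r : ℝ) with hC4def
  set b3 := (n.choose 3 : ℝ) with hb3def
  set b4 := (n.choose 4 : ℝ) with hb4def
  have hn6R : (6 : ℝ) ≤ nR := by rw [hnRdef]; exact_mod_cast hn6
  have hmnn : (0 : ℝ) ≤ mR := by rw [hmRdef]; positivity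
  have hb3pos : (0 : ℝ) < b3 := by rw [hb3def]; exact_mod_cast hb3posN
  have hb4pos : (0 : ℝ) < b4 := by rw [hb4def]; exact_mod_cast hb4posN
  have hC3nn : (0 : ℝ) ≤ C3 := by rw [hC3def]; positivity
  have hC4nn : (0 : ℝ) ≤ C4 := by rw [hC4def]; positivity
  have hARnn : (0 : ℝ) ≤ AR := by rw [hARdef]; positivity
  have hA3R : 3 * C3 ≤ AR := by rw [hARdef, hC3def]; exact_mod_cast hA3
  have hAmnR : AR ≤ mR * nR := by rw [hARdef, hmRdef, hnRdef]; exact_mod_cast hAmn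
  have e33 : b3 * 3 = mR * (nR - 2) := by
    have h := h33
    rw [← hmb2] at h
    have h' : ((n.choose 3 * 3 : ℕ) : ℝ) = ((m * (n - 2) : ℕ) : ℝ) := by exact_mod_cast h
    push_cast [Nat.cast_sub (show 2 ≤ n by omega)] at h'
    rw [hb3def, hmRdef, hnRdef]
    exact h'
  have e44 : b4 * 4 = b3 * (nR - 3) := by
    have h' : ((n.choose 4 * 4 : ℕ) : ℝ) = ((n.choose 3 * (n - 3) : ℕ) : ℝ) := by
      exact_mod_cast h44
    push_cast [Nat.cast_sub (show 3 ≤ n by omega)] at h'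
    rw [hb3def, hb4def, hnRdef]
    exact h'
  -- Cauchy-Schwarz chain
  have hAR_sum : AR = ∑ p ∈ tEset r, ((tDset r p).card : ℝ) := by
    rw [hARdef, hAdef, tS3_card hr]
    push_cast
    rfl
  have hCS : AR ^ 2 ≤ mR * ∑ p ∈ tEset r, ((tDset r p).card : ℝ) ^ 2 := by
    rw [hAR_sum, hmRdef, hmdef]
    exact_mod_cast sq_sum_le_card_mul_sum_sq
  have hself : ∀ k : ℕ, k ≤ k * k := by
    intro k
    cases k with
    | zero => exact le_refl 0
    | succ j => exact Nat.le_mul_of_pos_left _ (Nat.succ_pos j)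
  have hTR : ((tT4 r).card : ℝ) = (∑ p ∈ tEset r, ((tDset r p).card : ℝ) ^ 2) - AR := by
    rw [tT4_card hr, Nat.cast_sum, hAR_sum, ← Finset.sum_sub_distrib]
    refine Finset.sum_congr rfl fun p _ => ?_
    rw [Nat.cast_sub (hself _)]
    push_cast
    ring
  have hT2 : ((tT4 r).card : ℝ) ≤ 2 * C4 := by rw [hC4def]; exact_mod_cast tT4_le hr
  have hmaster : AR ^ 2 ≤ mR * (2 * C4 + AR) := by
    have h1 : mR * ((∑ p ∈ tEset r, ((tDset r p).card : ℝ) ^ 2)) =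
        mR * (((tT4 r).card : ℝ) + AR) := by rw [hTR]; ring
    have h2 : mR * (((tT4 r).card : ℝ) + AR) ≤ mR * (2 * C4 + AR) :=
      mul_le_mul_of_nonneg_left (by linarith) hmnn
    calc AR ^ 2 ≤ mR * ∑ p ∈ tEset r, ((tDset r p).card : ℝ) ^ 2 := hCS
      _ = mR * (((tT4 r).card : ℝ) + AR) := h1
      _ ≤ mR * (2 * C4 + AR) := h2
  have h9 : 9 * C3 ^ 2 ≤ mR * (2 * C4 + AR) := by
    nlinarith [mul_nonneg (sub_nonneg.mpr hA3R) (show (0:ℝ) ≤ AR + 3 * C3 by linarith)]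
  have hb3b4 : 4 * (mR * b4) ≤ 3 * b3 ^ 2 := by
    have t1 : 3 * b3 ^ 2 = mR * ((nR - 2) * b3) := by linear_combination b3 * e33
    have t2 : 4 * (mR * b4) = mR * (b3 * (nR - 3)) := by linear_combination mR * e44
    rw [t1, t2]
    apply mul_le_mul_of_nonneg_left _ hmnn
    nlinarith [hb3pos.le]
  have hdiamond : 12 * b4 * C3 ^ 2 ≤ b3 ^ 2 * (2 * C4 + AR) := by
    have hnn1 : (0 : ℝ) ≤ 4 * (mR * b4) := by positivity
    have hnn2 : (0 : ℝ) ≤ mR * (2 * C4 + AR) := le_trans (by positivity) h9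
    have hmul : (9 * C3 ^ 2) * (4 * (mR * b4)) ≤ (mR * (2 * C4 + AR)) * (3 * b3 ^ 2) :=
      mul_le_mul h9 hb3b4 hnn1 hnn2
    have hrearr : (3 * mR) * (12 * b4 * C3 ^ 2) ≤ (3 * mR) * (b3 ^ 2 * (2 * C4 + AR)) := by
      nlinarith [hmul]
    have h3m : (0 : ℝ) < 3 * mR := by
      have : (0 : ℝ) < mR := by rw [hmRdef]; exact_mod_cast hmpos
      linarith
    exact le_of_mul_le_mul_left hrearr h3m
  -- error term
  have h12b4 : 12 * b4 = mR * ((nR - 2) * (nR - 3)) := by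
    linear_combination 3 * e44 + (nR - 3) * e33
  have hne24 : 24 < ε * nR := by
    have hN0n : (N0 : ℝ) ≤ nR := by rw [hnRdef]; exact_mod_cast hnN0
    have h24 : 24 / ε < nR := lt_of_lt_of_le hN0 hN0n
    have := mul_lt_mul_of_pos_right h24 hε
    rw [div_mul_cancel₀] at this
    · linarith [this]
    · exact ne_of_gt hε
  have hq : nR * nR ≤ 4 * ((nR - 2) * (nR - 3)) := by nlinarith [hn6R]
  have h6n : 6 * nR ≤ ε * ((nR - 2) * (nR - 3)) := by
    nlinarith [mul_le_mul_of_nonneg_left hq hε.le,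
      mul_lt_mul_of_pos_right hne24 (show (0:ℝ) < nR by linarith)]
  have herr : AR / (2 * b4) ≤ ε := by
    rw [div_le_iff₀ (by positivity)]
    have hstep : mR * (6 * nR) ≤ mR * (ε * ((nR - 2) * (nR - 3))) :=
      mul_le_mul_of_nonneg_left h6n hmnn
    have heq6 : 6 * (ε * (2 * b4)) = mR * (ε * ((nR - 2) * (nR - 3))) := by
      linear_combination ε * h12b4
    linarith [hAmnR]
  -- final assembly
  rw [ge_iff_le, sub_le_iff_le_add]
  have key : 6 * (C3 / b3) ^ 2 ≤ (2 * C4 + AR) / (2 * b4) := by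
    have hrw : 6 * (C3 / b3) ^ 2 = (6 * C3 ^ 2) / b3 ^ 2 := by
      rw [div_pow]; ring
    rw [hrw, div_le_div_iff₀ (by positivity) (by positivity)]
    linarith [hdiamond]
  have hsplit : (2 * C4 + AR) / (2 * b4) = C4 / b4 + AR / (2 * b4) := by
    field_simp
  calc 6 * (C3 / b3) ^ 2 ≤ (2 * C4 + AR) / (2 * b4) := key
    _ = C4 / b4 + AR / (2 * b4) := hsplit
    _ ≤ C4 / b4 + ε := by linarith [herr]
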